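/- Let B be an n×n integer skew-symmetrizable matrix with n ≥ 2, let k ∈ {1,…,n}, and let B' be the (n−1)×(n−1) principal submatrix of B obtained by deleting row k and column k. Write the complex eigenvalues of B (with multiplicity) as i·λ_1, i·λ_2, …, i·λ_n with λ_1 ≥ λ_2 ≥ … ≥ λ_n real, and those of B' as i·γ_2, …, i·γ_n with γ_2 ≥ … ≥ γ_n real. Then λ_1 ≥ γ_2 ≥ λ_2 ≥ γ_3 ≥ λ_3 ≥ … ≥ γ_n ≥ λ_n. -/

import Mathlib

section Stmt10Helpers

open Matrix Polynomial Finset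

variable {N : ℕ}

lemma eval_charpoly' {N : ℕ} (A : Matrix (Fin N) (Fin N) ℂ) (z : ℂ) :
    (A.charpoly).eval z = (z • (1 : Matrix (Fin N) (Fin N) ℂ) - A).det := by
  rw [Matrix.charpoly, eval_det, Matrix.matPolyEquiv_charmatrix]
  simp [Matrix.scalar_apply, Matrix.smul_one_eq_diagonal]

lemma prod_X_sub_C_fin {N : ℕ} (a : Fin N → ℂ) :
    ∏ i, (X - C (a i)) = ((Multiset.map a Finset.univ.val).map (fun c => X - C c)).prod := by
  rw [Multiset.map_map]
  rfl

lemma ms_eq {N : ℕ} (a b : Fin N → ℂ) (h : ∀ z : ℂ, ∏ i, (z - a i) = ∏ i, (z - b i)) :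
    Multiset.map a Finset.univ.val = Multiset.map b Finset.univ.val := by
  have hp : ∏ i, (X - C (a i)) = ∏ i, (X - C (b i)) := by
    apply Polynomial.funext
    intro z
    simpa [eval_prod] using h z
  rw [prod_X_sub_C_fin, prod_X_sub_C_fin] at hp
  have := congrArg Polynomial.roots hp
  rwa [Polynomial.roots_multiset_prod_X_sub_C, Polynomial.roots_multiset_prod_X_sub_C] at this

lemma count_eq_of_ms_eq {N M : ℕ} {a : Fin N → ℂ} {b : Fin M → ℂ}
    (h : Multiset.map a Finset.univ.val = Multiset.map b Finset.univ.val)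
    (p : ℂ → Prop) [DecidablePred p] :
    (Finset.univ.filter (fun i => p (a i))).card = (Finset.univ.filter (fun i => p (b i))).card := by
  have := congrArg (Multiset.countP p) h
  rw [Multiset.countP_map, Multiset.countP_map] at this; exact this


local notation "⟪" x ", " y "⟫" => @inner ℂ _ _ x y

lemma inner_dot (x y : EuclideanSpace ℂ (Fin N)) :
    ⟪x, y⟫ = dotProduct (star (x : Fin N → ℂ)) (y : Fin N → ℂ) :=
  by rw [EuclideanSpace.inner_eq_star_dotProduct, dotProduct_comm]

lemma repr_vanish {S : Finset (Fin N)} (b : OrthonormalBasis (Fin N) ℂ (EuclideanSpace ℂ (Fin N)))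
    {x : EuclideanSpace ℂ (Fin N)}
    (hx : x ∈ Submodule.span ℂ ((fun i => (b i : EuclideanSpace ℂ (Fin N))) '' (S : Set (Fin N))))
    {i : Fin N} (hi : i ∉ S) : b.repr x i = 0 := by
  induction hx using Submodule.span_induction with
  | mem x h =>
    obtain ⟨j, hj, rfl⟩ := h
    rw [b.repr_self, EuclideanSpace.single_apply]
    simp only [ite_eq_right_iff]
    intro h; exact absurd (h ▸ hj) hi
  | zero => simp
  | add x y hx hy ihx ihy => simp [ihx, ihy]
  | smul a x hx ih => simp [ih]

lemma quad_expand {H : Matrix (Fin N) (Fin N) ℂ} (hH : H.IsHermitian)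
    (x : EuclideanSpace ℂ (Fin N)) :
    (dotProduct (star (x : Fin N → ℂ)) (H *ᵥ x)).re
      = ∑ i, hH.eigenvalues i * Complex.normSq (hH.eigenvectorBasis.repr x i) ∧
    (∑ i, Complex.normSq (x i)) = ∑ i, Complex.normSq (hH.eigenvectorBasis.repr x i) := by
  set b := hH.eigenvectorBasis with hb
  set c : Fin N → ℂ := fun i => b.repr x i with hc
  have hinner : ∀ i, ⟪x, (b i : EuclideanSpace ℂ (Fin N))⟫ = (starRingEnd ℂ) (c i) := by
    intro i
    rw [← inner_conj_symm, ← b.repr_apply_apply]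
  have hHx : (WithLp.toLp 2 (H *ᵥ x) : EuclideanSpace ℂ (Fin N))
      = ∑ i, ((hH.eigenvalues i : ℂ) * c i) • (b i : EuclideanSpace ℂ (Fin N)) := by
    have h1 : (WithLp.toLp 2 (H *ᵥ x) : EuclideanSpace ℂ (Fin N)) = Matrix.toEuclideanLin H x := rfl
    conv_lhs => rw [h1, ← b.sum_repr x, map_sum]
    refine Finset.sum_congr rfl fun i _ => ?_
    rw [_root_.map_smul, Matrix.toEuclideanLin_apply]
    have h2 : H *ᵥ (b i : Fin N → ℂ)
        = hH.eigenvalues i • (b i : Fin N → ℂ) := hH.mulVec_eigenvectorBasis i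
    rw [h2, RCLike.real_smul_eq_coe_smul (K := ℂ), WithLp.toLp_smul, WithLp.toLp_ofLp, smul_smul, mul_comm]
    rfl
  constructor
  · rw [show dotProduct (star (x : Fin N → ℂ)) (H *ᵥ x)
        = ⟪x, (WithLp.toLp 2 (H *ᵥ x) : EuclideanSpace ℂ (Fin N))⟫ from (inner_dot x (WithLp.toLp 2 (H *ᵥ x))).symm,
      hHx, inner_sum]
    simp only [inner_smul_right, hinner]
    rw [Complex.re_sum]
    refine Finset.sum_congr rfl fun i _ => ?_
    rw [show (hH.eigenvalues i : ℂ) * c i * (starRingEnd ℂ) (c i)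
        = (hH.eigenvalues i : ℂ) * (c i * (starRingEnd ℂ) (c i)) by ring,
      Complex.mul_conj]
    simp [← Complex.ofReal_mul, hc]
  · have : ⟪x, x⟫ = ∑ i, c i * (starRingEnd ℂ) (c i) := by
      rw [show (⟪x, x⟫ : ℂ) = ⟪x, (∑ i, c i • (b i : EuclideanSpace ℂ (Fin N)))⟫ from by
        rw [b.sum_repr x]]
      rw [inner_sum]
      simp only [inner_smul_right, hinner]
    have h2 : ⟪x, x⟫ = ∑ i, (starRingEnd ℂ) (x i) * (x i) := by
      rw [inner_dot]; rfl
    have h3 : (∑ i, (starRingEnd ℂ) (x i) * (x i) : ℂ).re = ∑ i, Complex.normSq (x i) := by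
      rw [Complex.re_sum]
      refine Finset.sum_congr rfl fun i _ => ?_
      rw [Complex.conj_mul']
      simp [← Complex.ofReal_pow, Complex.sq_norm]
    rw [h2] at this
    calc (∑ i, Complex.normSq (x i)) = (∑ i, (starRingEnd ℂ) (x i) * (x i) : ℂ).re := h3.symm
      _ = (∑ i, c i * (starRingEnd ℂ) (c i) : ℂ).re := by rw [this]
      _ = ∑ i, Complex.normSq (c i) := by
          rw [Complex.re_sum]
          refine Finset.sum_congr rfl fun i _ => ?_
          rw [Complex.mul_conj]
          simp


-- finrank of span of eigenbasis vectors over S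
lemma finrank_span_basis (b : OrthonormalBasis (Fin N) ℂ (EuclideanSpace ℂ (Fin N)))
    (S : Finset (Fin N)) :
    Module.finrank ℂ (Submodule.span ℂ
      ((fun i => (b i : EuclideanSpace ℂ (Fin N))) '' (S : Set (Fin N)))) = S.card := by
  have hli : LinearIndependent ℂ (fun i : S => (b i : EuclideanSpace ℂ (Fin N))) :=
    (b.orthonormal.linearIndependent).comp Subtype.val Subtype.val_injective
  have hrange : Set.range (fun i : S => (b i : EuclideanSpace ℂ (Fin N)))
      = (fun i => (b i : EuclideanSpace ℂ (Fin N))) '' (S : Set (Fin N)) := by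
    ext v
    simp [Set.range, Set.mem_image]
  rw [← hrange, finrank_span_eq_card hli, Fintype.card_coe]

-- existence of a nonzero vector in the intersection
lemma exists_nonzero_inf (U V : Submodule ℂ (EuclideanSpace ℂ (Fin N)))
    (h : N < Module.finrank ℂ U + Module.finrank ℂ V) :
    ∃ x : EuclideanSpace ℂ (Fin N), x ∈ U ⊓ V ∧ x ≠ 0 := by
  have hsum := Submodule.finrank_sup_add_finrank_inf_eq U V
  have hle : Module.finrank ℂ ↥(U ⊔ V) ≤ N := by
    simpa [finrank_euclideanSpace] using Submodule.finrank_le (U ⊔ V)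
  have hpos : 0 < Module.finrank ℂ ↥(U ⊓ V) := by omega
  have : Nontrivial ↥(U ⊓ V) := Module.finrank_pos_iff.mp hpos
  obtain ⟨⟨x, hx⟩, hne⟩ := exists_ne (0 : ↥(U ⊓ V))
  exact ⟨x, hx, fun h0 => hne (Subtype.ext h0)⟩

lemma exists_subspace_ge {H : Matrix (Fin N) (Fin N) ℂ} (hH : H.IsHermitian)
    (S : Finset (Fin N)) (t : ℝ) (ht : ∀ i ∈ S, t ≤ hH.eigenvalues i) :
    ∃ U : Submodule ℂ (EuclideanSpace ℂ (Fin N)), Module.finrank ℂ U = S.card ∧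
      ∀ x ∈ U, t * (∑ i, Complex.normSq (x i))
        ≤ (dotProduct (star (x : Fin N → ℂ)) (H *ᵥ x)).re := by
  refine ⟨_, finrank_span_basis hH.eigenvectorBasis S, fun x hx => ?_⟩
  obtain ⟨hq, hn⟩ := quad_expand hH x
  rw [hq, hn, Finset.mul_sum]
  refine Finset.sum_le_sum fun i _ => ?_
  by_cases hi : i ∈ S
  · exact mul_le_mul_of_nonneg_right (ht i hi) (Complex.normSq_nonneg _)
  · rw [repr_vanish hH.eigenvectorBasis hx hi]
    simp

lemma exists_subspace_le {H : Matrix (Fin N) (Fin N) ℂ} (hH : H.IsHermitian)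
    (S : Finset (Fin N)) (s : ℝ) (hs : ∀ i ∈ S, hH.eigenvalues i ≤ s) :
    ∃ U : Submodule ℂ (EuclideanSpace ℂ (Fin N)), Module.finrank ℂ U = S.card ∧
      ∀ x ∈ U, (dotProduct (star (x : Fin N → ℂ)) (H *ᵥ x)).re
        ≤ s * (∑ i, Complex.normSq (x i)) := by
  refine ⟨_, finrank_span_basis hH.eigenvectorBasis S, fun x hx => ?_⟩
  obtain ⟨hq, hn⟩ := quad_expand hH x
  rw [hq, hn, Finset.mul_sum]
  refine Finset.sum_le_sum fun i _ => ?_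
  by_cases hi : i ∈ S
  · exact mul_le_mul_of_nonneg_right (hs i hi) (Complex.normSq_nonneg _)
  · rw [repr_vanish hH.eigenvectorBasis hx hi]
    simp

lemma crossing {H : Matrix (Fin N) (Fin N) ℂ} (hH : H.IsHermitian)
    (U : Submodule ℂ (EuclideanSpace ℂ (Fin N))) (t s : ℝ)
    [DecidablePred fun i => hH.eigenvalues i ≤ s]
    (hU : ∀ x ∈ U, t * (∑ i, Complex.normSq (x i))
        ≤ (dotProduct (star (x : Fin N → ℂ)) (H *ᵥ x)).re)
    (hcard : N < Module.finrank ℂ U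
        + (Finset.univ.filter fun i => hH.eigenvalues i ≤ s).card) :
    t ≤ s := by
  obtain ⟨V, hVrk, hV⟩ := exists_subspace_le hH
    (Finset.univ.filter fun i => hH.eigenvalues i ≤ s) s (fun i hi => (Finset.mem_filter.mp hi).2)
  obtain ⟨x, hx, hx0⟩ := exists_nonzero_inf U V (by rw [hVrk]; exact hcard)
  have h1 := hU x hx.1
  have h2 := hV x hx.2
  have hn : 0 < ∑ i, Complex.normSq (x i) := by
    have : ∃ i, x i ≠ 0 := by
      by_contra h
      push_neg at h
      exact hx0 (PiLp.ext h)
    obtain ⟨i, hi⟩ := this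
    exact Finset.sum_pos' (fun j _ => Complex.normSq_nonneg _)
      ⟨i, Finset.mem_univ i, Complex.normSq_pos.mpr hi⟩
  exact le_of_mul_le_mul_right (h1.trans h2) hn

variable {m : ℕ} (k : Fin (m + 1))

noncomputable def Jmap (k : Fin (m + 1)) :
    EuclideanSpace ℂ (Fin m) →ₗ[ℂ] EuclideanSpace ℂ (Fin (m + 1)) where
  toFun y := WithLp.toLp 2 (Fin.insertNth k 0 (fun j => y j) : Fin (m + 1) → ℂ)
  map_add' y z := by
    ext i
    induction i using Fin.succAboveCases (i := k) <;> simp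
  map_smul' c y := by
    ext i
    induction i using Fin.succAboveCases (i := k) <;> simp

@[simp] lemma Jmap_same (y : EuclideanSpace ℂ (Fin m)) : Jmap k y k = 0 := by
  simp [Jmap]

@[simp] lemma Jmap_succAbove (y : EuclideanSpace ℂ (Fin m)) (j : Fin m) :
    Jmap k y (k.succAbove j) = y j := by
  simp [Jmap]

lemma Jmap_injective : Function.Injective (Jmap k) := by
  intro y z h
  ext j
  have := congrFun (congrArg (fun v : EuclideanSpace ℂ (Fin (m+1)) => (v : Fin (m+1) → ℂ)) h)
    (k.succAbove j)
  simpa using this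

lemma Jmap_dot (M : Matrix (Fin (m + 1)) (Fin (m + 1)) ℂ) (y : EuclideanSpace ℂ (Fin m)) :
    dotProduct (star (Jmap k y : Fin (m + 1) → ℂ)) (M *ᵥ (Jmap k y))
      = dotProduct (star (y : Fin m → ℂ)) ((M.submatrix k.succAbove k.succAbove) *ᵥ y) := by
  have hMv : ∀ j : Fin m, (M *ᵥ (Jmap k y : Fin (m+1) → ℂ)) (k.succAbove j)
      = ((M.submatrix k.succAbove k.succAbove) *ᵥ (y : Fin m → ℂ)) j := by
    intro j
    show dotProduct _ _ = dotProduct _ _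
    rw [dotProduct, dotProduct, Fin.sum_univ_succAbove _ k]
    simp [Matrix.submatrix_apply]
  rw [dotProduct, dotProduct, Fin.sum_univ_succAbove _ k]
  simp only [Pi.star_apply, Jmap_same, star_zero, zero_mul, zero_add, Jmap_succAbove, hMv]

lemma Jmap_normSq (y : EuclideanSpace ℂ (Fin m)) :
    ∑ i, Complex.normSq (Jmap k y i) = ∑ j, Complex.normSq (y j) := by
  rw [Fin.sum_univ_succAbove _ k]
  simp

lemma Jmap_range (x : EuclideanSpace ℂ (Fin (m + 1))) (hx : x k = 0) :
    Jmap k (WithLp.toLp 2 (fun j => x (k.succAbove j))) = x := by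
  ext i
  induction i using Fin.succAboveCases (i := k)
  · simpa using hx.symm
  · simp


lemma card_ge_le_filter {lam : Fin N → ℝ} (hlam : Antitone lam) (j : Fin N) :
    (j : ℕ) + 1 ≤ (Finset.univ.filter fun j' => lam j ≤ lam j').card := by
  have hsub : Finset.Iic j ⊆ Finset.univ.filter fun j' => lam j ≤ lam j' := by
    intro j' hj'
    rw [Finset.mem_Iic] at hj'
    exact Finset.mem_filter.mpr ⟨Finset.mem_univ _, hlam hj'⟩
  calc (j : ℕ) + 1 = (Finset.Iic j).card := (Fin.card_Iic j).symm
    _ ≤ _ := Finset.card_le_card hsub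

lemma card_le_filter {lam : Fin N → ℝ} (hlam : Antitone lam) (j : Fin N) :
    N - (j : ℕ) ≤ (Finset.univ.filter fun j' => lam j' ≤ lam j).card := by
  have hsub : Finset.Ici j ⊆ Finset.univ.filter fun j' => lam j' ≤ lam j := by
    intro j' hj'
    rw [Finset.mem_Ici] at hj'
    exact Finset.mem_filter.mpr ⟨Finset.mem_univ _, hlam hj'⟩
  calc N - (j : ℕ) = (Finset.Ici j).card := (Fin.card_Ici j).symm
    _ ≤ _ := Finset.card_le_card hsub



lemma det_conj_gen (P Q M : Matrix (Fin N) (Fin N) ℂ) (hPQ : P * Q = 1) (z : ℂ) :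
    (z • (1 : Matrix (Fin N) (Fin N) ℂ) - P * M * Q).det
      = (z • (1 : Matrix (Fin N) (Fin N) ℂ) - M).det := by
  have hkey : z • (1 : Matrix (Fin N) (Fin N) ℂ) - P * M * Q
      = P * (z • (1 : Matrix (Fin N) (Fin N) ℂ) - M) * Q := by
    rw [Matrix.mul_sub, Matrix.sub_mul, Matrix.mul_smul, Matrix.mul_one, Matrix.smul_mul, hPQ]
  have h1 : P.det * Q.det = 1 := by rw [← Matrix.det_mul, hPQ, Matrix.det_one]
  rw [hkey, Matrix.det_mul, Matrix.det_mul]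
  calc P.det * (z • (1 : Matrix (Fin N) (Fin N) ℂ) - M).det * Q.det
      = (z • (1 : Matrix (Fin N) (Fin N) ℂ) - M).det * (P.det * Q.det) := by ring
    _ = _ := by rw [h1, mul_one]

lemma diag_mul_inv_diag (f : Fin N → ℂ) (hf : ∀ i, f i ≠ 0) :
    diagonal f * diagonal f⁻¹ = 1 := by
  rw [Matrix.diagonal_mul_diagonal,
    show (fun i => f i * f⁻¹ i) = fun _ => (1:ℂ) from funext fun i => mul_inv_cancel₀ (hf i),
    Matrix.diagonal_one]

-- Hermitian-side determinant formula
lemma det_herm {H : Matrix (Fin N) (Fin N) ℂ} (hH : H.IsHermitian) (z : ℂ) :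
    (z • (1 : Matrix (Fin N) (Fin N) ℂ) - H).det = ∏ i, (z - (hH.eigenvalues i : ℂ)) := by
  have hU : (hH.eigenvectorUnitary : Matrix (Fin N) (Fin N) ℂ)
      * (star (hH.eigenvectorUnitary : Matrix (Fin N) (Fin N) ℂ)) = 1 :=
    Matrix.mem_unitaryGroup_iff.mp hH.eigenvectorUnitary.2
  conv_lhs => rw [hH.spectral_theorem, Unitary.conjStarAlgAut_apply]
  rw [det_conj_gen _ _ _ hU]
  rw [Matrix.smul_one_eq_diagonal, Matrix.diagonal_sub, Matrix.det_diagonal]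
  rfl

-- skew-symmetrizable-side determinant formula
lemma det_skew (A : Matrix (Fin N) (Fin N) ℂ) (f : Fin N → ℂ) (hf : ∀ i, f i ≠ 0)
    (lam : Fin N → ℝ)
    (hspec : A.charpoly = ∏ j, (X - C ((lam j : ℂ) * Complex.I))) (z : ℂ) :
    (z • (1 : Matrix (Fin N) (Fin N) ℂ)
      - (-Complex.I) • (diagonal f * A * diagonal f⁻¹)).det = ∏ j, (z - (lam j : ℂ)) := by
  set G := diagonal f * A * diagonal f⁻¹ with hG
  have h1 : z • (1 : Matrix (Fin N) (Fin N) ℂ) - (-Complex.I) • G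
      = Complex.I • (G - (Complex.I * z) • (1 : Matrix (Fin N) (Fin N) ℂ)) := by
    rw [smul_sub, smul_smul, show Complex.I * (Complex.I * z) = -z by
      rw [← mul_assoc, Complex.I_mul_I]; ring]
    rw [neg_smul, sub_neg_eq_add, neg_smul, sub_neg_eq_add]
    exact add_comm _ _
  have h2 : G - (Complex.I * z) • (1 : Matrix (Fin N) (Fin N) ℂ)
      = (-1 : ℂ) • ((Complex.I * z) • (1 : Matrix (Fin N) (Fin N) ℂ) - G) := by
    rw [neg_one_smul, neg_sub]
  rw [h1, h2, Matrix.det_smul, Matrix.det_smul, det_conj_gen _ _ _ (diag_mul_inv_diag f hf),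
    ← eval_charpoly', hspec]
  rw [eval_prod]
  simp only [eval_sub, eval_X, eval_C]
  have h3 : ∏ j, (Complex.I * z - (lam j : ℂ) * Complex.I)
      = ∏ j, (Complex.I * (z - (lam j : ℂ))) := by
    refine Finset.prod_congr rfl fun j _ => by ring
  rw [h3, Finset.prod_mul_distrib, Finset.prod_const, Finset.card_univ, Fintype.card_fin]
  have hc : (Complex.I ^ N) * ((-1:ℂ)^N) * (Complex.I ^ N) = 1 := by
    rw [← mul_pow, ← mul_pow,
      show Complex.I * (-1:ℂ) * Complex.I = 1 by
        rw [mul_neg_one, neg_mul, Complex.I_mul_I, neg_neg],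
      one_pow]
  linear_combination (∏ x, (z - (lam x : ℂ))) * hc


lemma entry_form (f : Fin N → ℂ) (A : Matrix (Fin N) (Fin N) ℂ) (i j : Fin N) :
    ((-Complex.I) • (diagonal f * A * diagonal f⁻¹)) i j
      = -Complex.I * (f i * A i j * (f j)⁻¹) := by
  simp [Matrix.smul_apply, Matrix.mul_diagonal, Matrix.diagonal_mul, Pi.inv_apply, mul_assoc]

lemma herm_of (g : Fin N → ℝ) (hg : ∀ i, 0 < g i) (A : Matrix (Fin N) (Fin N) ℂ)
    (hconj : ∀ i j, (starRingEnd ℂ) (A i j) = A i j)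
    (hskew : ∀ i j, ((g i : ℂ))^2 * A i j = -(((g j : ℂ))^2 * A j i)) :
    ((-Complex.I) • (diagonal (fun i => (g i : ℂ)) * A
      * diagonal (fun i => (g i : ℂ))⁻¹)).IsHermitian := by
  rw [Matrix.IsHermitian]
  ext i j
  rw [Matrix.conjTranspose_apply, entry_form, entry_form]
  have hgi : ((g i : ℂ)) ≠ 0 := Complex.ofReal_ne_zero.mpr (ne_of_gt (hg i))
  have hgj : ((g j : ℂ)) ≠ 0 := Complex.ofReal_ne_zero.mpr (ne_of_gt (hg j))
  have hstar : star (-Complex.I * ((g j : ℂ) * A j i * ((g i : ℂ))⁻¹))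
      = Complex.I * ((g j : ℂ) * A j i * ((g i : ℂ))⁻¹) := by
    simp only [star_mul', star_inv₀]
    rw [show star ((g i : ℂ)) = ((g i : ℂ)) from Complex.conj_ofReal _,
      show star ((g j : ℂ)) = ((g j : ℂ)) from Complex.conj_ofReal _,
      show star (A j i) = A j i from hconj j i]
    simp only [star_neg, Complex.star_def, Complex.conj_I]
    ring
  rw [hstar]
  field_simp
  linear_combination hskew i j

lemma submatrix_form (f : Fin N → ℂ) (A : Matrix (Fin N) (Fin N) ℂ) {M : ℕ} (σ : Fin M → Fin N) :
    ((-Complex.I) • (diagonal f * A * diagonal f⁻¹)).submatrix σ σ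
      = (-Complex.I) • (diagonal (f ∘ σ) * (A.submatrix σ σ) * diagonal (f ∘ σ)⁻¹) := by
  ext i j
  rw [Matrix.submatrix_apply, entry_form, entry_form]
  rfl

lemma interlace {m : ℕ} (k : Fin (m + 1)) (H : Matrix (Fin (m + 1)) (Fin (m + 1)) ℂ)
    (hH : H.IsHermitian) (hH' : (H.submatrix k.succAbove k.succAbove).IsHermitian)
    (lam : Fin (m + 1) → ℝ) (hlam : Antitone lam) (gam : Fin m → ℝ) (hgam : Antitone gam)
    (hms : Multiset.map (fun i => (hH.eigenvalues i : ℂ)) Finset.univ.val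
      = Multiset.map (fun j => ((lam j : ℂ))) Finset.univ.val)
    (hms' : Multiset.map (fun i => (hH'.eigenvalues i : ℂ)) Finset.univ.val
      = Multiset.map (fun j => ((gam j : ℂ))) Finset.univ.val) :
    ∀ j : Fin m, gam j ≤ lam j.castSucc ∧ lam j.succ ≤ gam j := by
  intro j
  have hcnt1 : ∀ t : ℝ, (Finset.univ.filter fun i => t ≤ hH.eigenvalues i).card
      = (Finset.univ.filter fun j' => t ≤ lam j').card := by
    intro t
    have := count_eq_of_ms_eq hms (fun z => t ≤ z.re)
    simpa using this
  have hcnt2 : ∀ t : ℝ, (Finset.univ.filter fun i => hH.eigenvalues i ≤ t).card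
      = (Finset.univ.filter fun j' => lam j' ≤ t).card := by
    intro t
    have := count_eq_of_ms_eq hms (fun z => z.re ≤ t)
    simpa using this
  have hcnt1' : ∀ t : ℝ, (Finset.univ.filter fun i => t ≤ hH'.eigenvalues i).card
      = (Finset.univ.filter fun j' => t ≤ gam j').card := by
    intro t
    have := count_eq_of_ms_eq hms' (fun z => t ≤ z.re)
    simpa using this
  have hcnt2' : ∀ t : ℝ, (Finset.univ.filter fun i => hH'.eigenvalues i ≤ t).card
      = (Finset.univ.filter fun j' => gam j' ≤ t).card := by
    intro t
    have := count_eq_of_ms_eq hms' (fun z => z.re ≤ t)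
    simpa using this
  constructor
  · -- gam j ≤ lam j.castSucc
    set t := gam j
    obtain ⟨W', hW'rk, hW'⟩ := exists_subspace_ge hH'
      (Finset.univ.filter fun i => t ≤ hH'.eigenvalues i) t
      (fun i hi => (Finset.mem_filter.mp hi).2)
    set U := Submodule.map (Jmap k) W' with hU
    have hUq : ∀ x ∈ U, t * (∑ i, Complex.normSq (x i))
        ≤ (dotProduct (star (x : Fin (m+1) → ℂ)) (H *ᵥ x)).re := by
      rintro x ⟨y, hy, rfl⟩
      rw [Jmap_dot, Jmap_normSq]
      exact hW' y hy
    have hUrk : Module.finrank ℂ U = Module.finrank ℂ W' :=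
      (LinearEquiv.finrank_eq (Submodule.equivMapOfInjective _ (Jmap_injective k) W')).symm
    have hcard1 : (j : ℕ) + 1 ≤ Module.finrank ℂ U := by
      rw [hUrk, hW'rk, hcnt1' t]
      exact card_ge_le_filter hgam j
    have hcard2 : (m + 1) - (j : ℕ)
        ≤ (Finset.univ.filter fun i => hH.eigenvalues i ≤ lam j.castSucc).card := by
      rw [hcnt2 (lam j.castSucc)]
      have := card_le_filter hlam j.castSucc
      simpa using this
    refine crossing hH U t (lam j.castSucc) hUq ?_
    have hjm : (j : ℕ) < m := j.isLt
    omega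
  · -- lam j.succ ≤ gam j
    set t := lam j.succ
    obtain ⟨W, hWrk, hW⟩ := exists_subspace_ge hH
      (Finset.univ.filter fun i => t ≤ hH.eigenvalues i) t
      (fun i hi => (Finset.mem_filter.mp hi).2)
    set φ : EuclideanSpace ℂ (Fin (m + 1)) →ₗ[ℂ] ℂ :=
      { toFun := fun x => x k, map_add' := fun _ _ => rfl, map_smul' := fun _ _ => rfl } with hφ
    set K := LinearMap.ker φ with hK
    have hKrk : m ≤ Module.finrank ℂ K := by
      have h1 := LinearMap.finrank_range_add_finrank_ker φ
      have h2 : Module.finrank ℂ (LinearMap.range φ) ≤ 1 := by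
        simpa [Module.finrank_self] using Submodule.finrank_le (LinearMap.range φ)
      rw [finrank_euclideanSpace, Fintype.card_fin] at h1
      rw [hK]
      omega
    have hWcard : (j : ℕ) + 2 ≤ Module.finrank ℂ W := by
      rw [hWrk, hcnt1 t]
      have := card_ge_le_filter hlam j.succ
      simp only [Fin.val_succ] at this; exact this
    have hWK : (j : ℕ) + 1 ≤ Module.finrank ℂ ↥(W ⊓ K) := by
      have h1 := Submodule.finrank_sup_add_finrank_inf_eq W K
      have h2 : Module.finrank ℂ ↥(W ⊔ K) ≤ m + 1 := by
        simpa [finrank_euclideanSpace] using Submodule.finrank_le (W ⊔ K)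
      omega
    set U' := Submodule.comap (Jmap k) (W ⊓ K) with hU'
    have hle : W ⊓ K ≤ LinearMap.range (Jmap k) := by
      intro x hx
      have hxk : x k = 0 := hx.2
      exact ⟨WithLp.toLp 2 (fun j' => x (k.succAbove j')), Jmap_range k x hxk⟩
    have hmapU' : Submodule.map (Jmap k) U' = W ⊓ K := by
      rw [hU', Submodule.map_comap_eq, inf_eq_right.mpr hle]
    have hU'rk : (j : ℕ) + 1 ≤ Module.finrank ℂ U' := by
      have := Submodule.finrank_map_le (Jmap k) U'
      rw [hmapU'] at this
      omega
    have hU'q : ∀ y ∈ U', t * (∑ i, Complex.normSq (y i))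
        ≤ (dotProduct (star (y : Fin m → ℂ))
            ((H.submatrix k.succAbove k.succAbove) *ᵥ y)).re := by
      intro y hy
      have hyW : Jmap k y ∈ W := (Submodule.mem_comap.mp hy).1
      have := hW _ hyW
      rwa [Jmap_dot, Jmap_normSq] at this
    refine crossing hH' U' t (gam j) hU'q ?_
    have hcard2 : m - (j : ℕ)
        ≤ (Finset.univ.filter fun i => hH'.eigenvalues i ≤ gam j).card := by
      rw [hcnt2' (gam j)]
      exact card_le_filter hgam j
    have hjm : (j : ℕ) < m := j.isLt
    omega

def SkewSymmetrizable {n : ℕ} (B : Matrix (Fin n) (Fin n) ℤ) : Prop :=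
  ∃ d : Fin n → ℤ, (∀ i, 0 < d i) ∧ ∀ i j, d i * B i j = - (d j * B j i)

end Stmt10Helpers

open Polynomial in
theorem stmt10 {m : ℕ} (hm : 1 ≤ m) (B : Matrix (Fin (m + 1)) (Fin (m + 1)) ℤ)
    (hB : SkewSymmetrizable B) (k : Fin (m + 1))
    (lam : Fin (m + 1) → ℝ) (hlam : Antitone lam)
    (gam : Fin m → ℝ) (hgam : Antitone gam)
    (hBspec : Matrix.charpoly (B.map (Int.cast : ℤ → ℂ)) =
      ∏ j : Fin (m + 1), (X - C ((lam j : ℂ) * Complex.I)))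
    (hB'spec : Matrix.charpoly ((B.submatrix k.succAbove k.succAbove).map
        (Int.cast : ℤ → ℂ)) =
      ∏ j : Fin m, (X - C ((gam j : ℂ) * Complex.I))) :
    ∀ j : Fin m, gam j ≤ lam j.castSucc ∧ lam j.succ ≤ gam j := by
  obtain ⟨d, hd0, hdskew⟩ := hB
  set A : Matrix (Fin (m + 1)) (Fin (m + 1)) ℂ := B.map (Int.cast : ℤ → ℂ) with hA
  set g : Fin (m + 1) → ℝ := fun i => Real.sqrt (d i) with hgdef
  have hg : ∀ i, 0 < g i := fun i => Real.sqrt_pos.mpr (by exact_mod_cast hd0 i)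
  have hfne : ∀ i, ((g i : ℂ)) ≠ 0 := fun i => Complex.ofReal_ne_zero.mpr (ne_of_gt (hg i))
  have hsq : ∀ i, ((g i : ℂ))^2 = ((d i : ℤ) : ℂ) := by
    intro i
    have h1 : (g i)^2 = ((d i : ℤ) : ℝ) := Real.sq_sqrt (by exact_mod_cast (hd0 i).le)
    calc ((g i : ℂ))^2 = (((g i)^2 : ℝ) : ℂ) := by push_cast; ring
      _ = ((d i : ℤ) : ℂ) := by rw [h1]; push_cast; ring
  have hconj : ∀ i j, (starRingEnd ℂ) (A i j) = A i j := by
    intro i j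
    rw [hA, Matrix.map_apply]
    exact map_intCast (starRingEnd ℂ) (B i j)
  have hskew : ∀ i j, ((g i : ℂ))^2 * A i j = -(((g j : ℂ))^2 * A j i) := by
    intro i j
    rw [hsq i, hsq j, hA, Matrix.map_apply, Matrix.map_apply]
    exact_mod_cast congrArg (Int.cast : ℤ → ℂ) (hdskew i j)
  set H : Matrix (Fin (m + 1)) (Fin (m + 1)) ℂ :=
    (-Complex.I) • (Matrix.diagonal (fun i => (g i : ℂ)) * A * Matrix.diagonal (fun i => (g i : ℂ))⁻¹) with hH0
  have hH : H.IsHermitian := herm_of g hg A hconj hskew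
  have hH' : (H.submatrix k.succAbove k.succAbove).IsHermitian := hH.submatrix k.succAbove
  have hms : Multiset.map (fun i => (hH.eigenvalues i : ℂ)) Finset.univ.val
      = Multiset.map (fun j => ((lam j : ℂ))) Finset.univ.val := by
    refine ms_eq _ _ fun z => ?_
    rw [← det_herm hH z, hH0]
    exact det_skew A _ hfne lam hBspec z
  have hms' : Multiset.map (fun i => (hH'.eigenvalues i : ℂ)) Finset.univ.val
      = Multiset.map (fun j => ((gam j : ℂ))) Finset.univ.val := by
    refine ms_eq _ _ fun z => ?_
    rw [← det_herm hH' z]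
    have hsub : H.submatrix k.succAbove k.succAbove
        = (-Complex.I) • (Matrix.diagonal ((fun i => (g i : ℂ)) ∘ k.succAbove)
          * (A.submatrix k.succAbove k.succAbove)
          * Matrix.diagonal ((fun i => (g i : ℂ)) ∘ k.succAbove)⁻¹) := by
      rw [hH0]
      exact submatrix_form _ A k.succAbove
    rw [hsub]
    refine det_skew _ _ (fun i => hfne _) gam ?_ z
    rw [show A.submatrix k.succAbove k.succAbove
      = (B.submatrix k.succAbove k.succAbove).map (Int.cast : ℤ → ℂ) from rfl]
    exact hB'spec
  exact interlace k H hH hH' lam hlam gam hgam hms hms'
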